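/- Let S be an OLFM system on an odd number n of actors, with collective decision function C_S obtained by applying the unanimity rule layer by layer, followed by simple majority. Then C_S is monotonic with respect to inclusion: if x, y ∈ {0,1}^n satisfy x_j ≤ y_j for all j, then C_S(x) ≤ C_S(y). -/
import Mathlib


open Finset

/-- The set of predecessors of `i` in the digraph with edge set `E`. -/
def preds {n : ℕ} (E : Finset (Fin n × Fin n)) (i : Fin n) : Finset (Fin n) :=
  Finset.univ.filter (fun j => (j, i) ∈ E)

/-- The set of successors of `i` in the digraph with edge set `E`. -/
def succs {n : ℕ} (E : Finset (Fin n × Fin n)) (i : Fin n) : Finset (Fin n) :=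
  Finset.univ.filter (fun j => (i, j) ∈ E)

/-- `E` is the edge set of an OLF system: every edge runs from a vertex with no
predecessors (an opinion leader) to a vertex with no successors (a follower). -/
def IsOLF {n : ℕ} (E : Finset (Fin n × Fin n)) : Prop :=
  ∀ e ∈ E, preds E e.1 = ∅ ∧ succs E e.2 = ∅

/-- One step of the unanimity rule: actor `i` adopts the common decision of its
predecessors (as recorded in `c`) if they are nonempty and unanimous, and keeps
its own initial decision `x i` otherwise. -/
def unanStep {n : ℕ} (E : Finset (Fin n × Fin n)) (x c : Fin n → Bool) (i : Fin n) : Bool :=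
  if (preds E i).Nonempty ∧ ∀ j ∈ preds E i, c j = true then true
  else if (preds E i).Nonempty ∧ ∀ j ∈ preds E i, c j = false then false
  else x i

/-- The collective decision vector of an OLF system. -/
def olfVec {n : ℕ} (E : Finset (Fin n × Fin n)) (x : Fin n → Bool) : Fin n → Bool :=
  unanStep E x x

/-- Simple majority over a decision vector. -/
def majority {n : ℕ} (c : Fin n → Bool) : Bool :=
  decide ((Finset.univ.filter (fun i => c i = true)).card >
          (Finset.univ.filter (fun i => c i = false)).card)

/-- The collective decision function of an OLF system. -/
def olfC {n : ℕ} (E : Finset (Fin n × Fin n)) (x : Fin n → Bool) : Bool :=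
  majority (olfVec E x)

/-- The satisfaction score of actor `i` under a collective decision making model `C`. -/
def SAT {n : ℕ} (C : (Fin n → Bool) → Bool) (i : Fin n) : ℕ :=
  (Finset.univ.filter (fun x : Fin n → Bool => C x = x i)).card

/-- `layer` witnesses that `E` is a layered digraph: every edge goes from a
vertex in some layer to a vertex in the layer immediately below. -/
def IsLayered {n : ℕ} (E : Finset (Fin n × Fin n)) (layer : Fin n → ℕ) : Prop :=
  ∀ e ∈ E, layer e.2 = layer e.1 + 1

/-- `E` is the edge set of an OLFM system, i.e. a layered digraph. -/
def IsOLFM {n : ℕ} (E : Finset (Fin n × Fin n)) : Prop :=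
  ∃ layer : Fin n → ℕ, IsLayered E layer

/-- The collective decision vector of an OLFM system, computed layer by layer:
since each layer only depends on the one above it, iterating the unanimity step
`n` times computes the stable, layer-by-layer collective decision vector. -/
def olfmVec {n : ℕ} (E : Finset (Fin n × Fin n)) (x : Fin n → Bool) : Fin n → Bool :=
  (fun c => unanStep E x c)^[n] x

/-- The collective decision function of an OLFM system. -/
def olfmC {n : ℕ} (E : Finset (Fin n × Fin n)) (x : Fin n → Bool) : Bool :=
  majority (olfmVec E x)


lemma unanStep_mono {n : ℕ} (E : Finset (Fin n × Fin n)) {x y c d : Fin n → Bool}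
    (hxy : ∀ j, x j ≤ y j) (hcd : ∀ j, c j ≤ d j) (i : Fin n) :
    unanStep E x c i ≤ unanStep E y d i := by
  unfold unanStep
  by_cases h1 : (preds E i).Nonempty ∧ ∀ j ∈ preds E i, c j = true
  · have h1' : (preds E i).Nonempty ∧ ∀ j ∈ preds E i, d j = true := by
      refine ⟨h1.1, fun j hj => ?_⟩
      have := hcd j; rw [h1.2 j hj] at this
      exact le_antisymm (Bool.le_true _) this
    rw [if_pos h1, if_pos h1']
  · rw [if_neg h1]
    by_cases h2 : (preds E i).Nonempty ∧ ∀ j ∈ preds E i, c j = false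
    · rw [if_pos h2]; exact Bool.false_le _
    · rw [if_neg h2]
      have h2' : ¬((preds E i).Nonempty ∧ ∀ j ∈ preds E i, d j = false) := by
        intro hd
        exact h2 ⟨hd.1, fun j hj => by
          have := hcd j; rw [hd.2 j hj] at this
          exact le_antisymm this (Bool.false_le _)⟩
      rw [if_neg h2']
      by_cases h1' : (preds E i).Nonempty ∧ ∀ j ∈ preds E i, d j = true
      · rw [if_pos h1']; exact Bool.le_true _
      · rw [if_neg h1']; exact hxy i

lemma olfmVec_mono {n : ℕ} (E : Finset (Fin n × Fin n)) {x y : Fin n → Bool}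
    (hxy : ∀ j, x j ≤ y j) (i : Fin n) : olfmVec E x i ≤ olfmVec E y i := by
  unfold olfmVec
  have : ∀ k i, (fun c => unanStep E x c)^[k] x i ≤ (fun c => unanStep E y c)^[k] y i := by
    intro k
    induction k with
    | zero => exact hxy
    | succ m ih =>
      intro i
      rw [Function.iterate_succ_apply', Function.iterate_succ_apply']
      exact unanStep_mono E hxy ih i
  exact this n i

lemma majority_mono {n : ℕ} {c d : Fin n → Bool} (h : ∀ i, c i ≤ d i) :
    majority c ≤ majority d := by
  unfold majority
  have h1 : (Finset.univ.filter fun i => c i = true).card ≤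
      (Finset.univ.filter fun i => d i = true).card := by
    apply Finset.card_le_card
    intro i hi
    simp only [Finset.mem_filter, Finset.mem_univ, true_and] at *
    have := h i; rw [hi] at this
    exact le_antisymm (Bool.le_true _) this
  have h2 : (Finset.univ.filter fun i => d i = false).card ≤
      (Finset.univ.filter fun i => c i = false).card := by
    apply Finset.card_le_card
    intro i hi
    simp only [Finset.mem_filter, Finset.mem_univ, true_and] at *
    have := h i; rw [hi] at this
    exact le_antisymm this (Bool.false_le _)
  simp only [Bool.le_iff_imp, decide_eq_true_eq]
  omega

/-- The collective decision function of an OLFM system on an odd number of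
actors is monotonic with respect to inclusion. -/
theorem olfm_monotone (n : ℕ) (hn : Odd n) (E : Finset (Fin n × Fin n))
    (layer : Fin n → ℕ) (hL : IsLayered E layer)
    (x y : Fin n → Bool) (hxy : ∀ j, x j ≤ y j) :
    olfmC E x ≤ olfmC E y := by
  apply majority_mono
  exact olfmVec_mono E hxy
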